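/- If F, F' : F_2^m → F_2^m are CCZ-equivalent (i.e. there is a linear permutation L of F_2^{2m} mapping the graph {(x,F(x))} onto the graph {(x,F'(x))}), then F and F' have the same Walsh spectrum multiset, i.e. {λ_F(a,b) : a,b} = {λ_{F'}(a,b) : a,b} where λ_F(a,b)=Σ_x (-1)^{b·F(x)+a·x}. -/

import Mathlib

open scoped BigOperators

/-- The Walsh transform value `λ_F(a,b) = Σ_x (-1)^{b·F(x) + a·x}`. -/
noncomputable def walsh (m : ℕ) (F : (Fin m → ZMod 2) → (Fin m → ZMod 2))
    (a b : Fin m → ZMod 2) : ℤ :=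
  ∑ x : Fin m → ZMod 2, (-1 : ℤ) ^ (dotProduct b (F x) + dotProduct a x).val

/-- The bilinear pairing on `(𝔽₂^m)²`. -/
noncomputable def Bf (m : ℕ) :
    ((Fin m → ZMod 2) × (Fin m → ZMod 2)) →ₗ[ZMod 2]
      ((Fin m → ZMod 2) × (Fin m → ZMod 2)) →ₗ[ZMod 2] ZMod 2 :=
  LinearMap.mk₂ (ZMod 2)
    (fun c p => dotProduct c.1 p.1 + dotProduct c.2 p.2)
    (by intro a b c; simp [add_dotProduct]; ring)
    (by intro r a b; simp [smul_dotProduct]; ring)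
    (by intro a b c; simp [dotProduct_add]; ring)
    (by intro r a b; simp [dotProduct_smul]; ring)

lemma Bf_apply (m : ℕ) (c p : (Fin m → ZMod 2) × (Fin m → ZMod 2)) :
    Bf m c p = dotProduct c.1 p.1 + dotProduct c.2 p.2 := rfl

lemma Bf_injective (m : ℕ) : Function.Injective (Bf m) := by
  rw [injective_iff_map_eq_zero]
  intro c hc
  have h1 : ∀ i, c.1 i = 0 := by
    intro i
    have := congrArg (fun f => f (Pi.single i 1, 0)) (congrArg (fun f => f.toFun) hc)
    simpa [Bf_apply, dotProduct_single] using this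
  have h2 : ∀ i, c.2 i = 0 := by
    intro i
    have := congrArg (fun f => f (0, Pi.single i 1)) (congrArg (fun f => f.toFun) hc)
    simpa [Bf_apply, dotProduct_single] using this
  exact Prod.ext (funext h1) (funext h2)

/-- The pairing gives an isomorphism onto the dual. -/
noncomputable def toDualEquiv (m : ℕ) :
    ((Fin m → ZMod 2) × (Fin m → ZMod 2)) ≃ₗ[ZMod 2]
      Module.Dual (ZMod 2) ((Fin m → ZMod 2) × (Fin m → ZMod 2)) :=
  LinearEquiv.ofBijective (Bf m)
    ⟨Bf_injective m, by
      rw [← LinearMap.injective_iff_surjective_of_finrank_eq_finrank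
        (Subspace.dual_finrank_eq (K := ZMod 2)
          (V := (Fin m → ZMod 2) × (Fin m → ZMod 2))).symm]
      exact Bf_injective m⟩

lemma toDualEquiv_apply (m : ℕ) (c : (Fin m → ZMod 2) × (Fin m → ZMod 2)) :
    toDualEquiv m c = Bf m c := rfl

/-- Adjoint of a linear equiv with respect to the pairing. -/
noncomputable def adj (m : ℕ)
    (L : ((Fin m → ZMod 2) × (Fin m → ZMod 2)) ≃ₗ[ZMod 2]
         ((Fin m → ZMod 2) × (Fin m → ZMod 2))) :
    ((Fin m → ZMod 2) × (Fin m → ZMod 2)) ≃ₗ[ZMod 2]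
      ((Fin m → ZMod 2) × (Fin m → ZMod 2)) :=
  (toDualEquiv m).trans (L.dualMap.trans (toDualEquiv m).symm)

lemma adj_spec (m : ℕ)
    (L : ((Fin m → ZMod 2) × (Fin m → ZMod 2)) ≃ₗ[ZMod 2]
         ((Fin m → ZMod 2) × (Fin m → ZMod 2)))
    (c p : (Fin m → ZMod 2) × (Fin m → ZMod 2)) :
    Bf m (adj m L c) p = Bf m c (L p) := by
  have : toDualEquiv m (adj m L c) = L.dualMap (toDualEquiv m c) := by
    simp [adj]
  have := congrArg (fun f => f p) this
  simpa [toDualEquiv_apply] using this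

lemma walsh_eq_sum_Bf (m : ℕ) (F : (Fin m → ZMod 2) → (Fin m → ZMod 2))
    (c : (Fin m → ZMod 2) × (Fin m → ZMod 2)) :
    walsh m F c.1 c.2 =
      ∑ x : Fin m → ZMod 2, (-1 : ℤ) ^ (Bf m c (x, F x)).val := by
  unfold walsh
  refine Finset.sum_congr rfl fun x _ => ?_
  rw [Bf_apply]
  simp [add_comm]

/-- If `F` and `F'` are CCZ-equivalent, i.e. some linear permutation of
`𝔽₂^{2m}` maps the graph of `F` onto the graph of `F'`, then they have the
same Walsh spectrum multiset. -/
theorem stmt_1 (m : ℕ) (F F' : (Fin m → ZMod 2) → (Fin m → ZMod 2))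
    (L : ((Fin m → ZMod 2) × (Fin m → ZMod 2)) ≃ₗ[ZMod 2]
         ((Fin m → ZMod 2) × (Fin m → ZMod 2)))
    (hL : L '' {p | p.2 = F p.1} = {p | p.2 = F' p.1}) :
    Multiset.map (fun p => walsh m F p.1 p.2)
        (Finset.univ : Finset ((Fin m → ZMod 2) × (Fin m → ZMod 2))).val =
    Multiset.map (fun p => walsh m F' p.1 p.2)
        (Finset.univ : Finset ((Fin m → ZMod 2) × (Fin m → ZMod 2))).val := by
  set E := adj m L with hE
  -- σ maps x to the first coordinate of L (x, F x)
  set σ : (Fin m → ZMod 2) → (Fin m → ZMod 2) := fun x => (L (x, F x)).1 with hσ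
  have hgraph : ∀ x, L (x, F x) = (σ x, F' (σ x)) := by
    intro x
    have hmem : L (x, F x) ∈ L '' {p | p.2 = F p.1} := ⟨(x, F x), rfl, rfl⟩
    rw [hL] at hmem
    exact Prod.ext rfl hmem
  have hσbij : Function.Bijective σ := by
    constructor
    · intro x y hxy
      have : L (x, F x) = L (y, F y) := by
        rw [hgraph x, hgraph y, hxy]
      have := L.injective this
      exact congrArg Prod.fst this
    · intro y
      have hmem : (y, F' y) ∈ {p : (Fin m → ZMod 2) × (Fin m → ZMod 2) | p.2 = F' p.1} := rfl
      rw [← hL] at hmem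
      obtain ⟨p, hp, hLp⟩ := hmem
      refine ⟨p.1, ?_⟩
      have hp' : p = (p.1, F p.1) := Prod.ext rfl hp
      have : L (p.1, F p.1) = (y, F' y) := by rw [← hp']; exact hLp
      simpa [hσ] using congrArg Prod.fst this
  -- pointwise identity: walsh F' c = walsh F (E c)
  have key : ∀ c : (Fin m → ZMod 2) × (Fin m → ZMod 2),
      walsh m F' c.1 c.2 = walsh m F (E c).1 (E c).2 := by
    intro c
    rw [walsh_eq_sum_Bf, walsh_eq_sum_Bf]
    refine (Fintype.sum_bijective σ hσbij _ _ fun x => ?_).symm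
    rw [adj_spec, hgraph x]
  -- now rearrange the multisets using the bijection E
  have hmapE : Multiset.map (⇑E) (Finset.univ :
      Finset ((Fin m → ZMod 2) × (Fin m → ZMod 2))).val =
      (Finset.univ : Finset ((Fin m → ZMod 2) × (Fin m → ZMod 2))).val := by
    have := congrArg Finset.val (Finset.map_univ_equiv E.toEquiv)
    rw [Finset.map_val] at this
    exact this
  have hfun : (fun p : (Fin m → ZMod 2) × (Fin m → ZMod 2) => walsh m F' p.1 p.2)
      = (fun p => walsh m F p.1 p.2) ∘ ⇑E := funext fun p => key p
  rw [hfun, ← Multiset.map_map, hmapE]
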